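/- arXiv:2411.08264 — 2 statements merged into one kernel-verified Lean document; each statement's English description precedes it below -/
import Mathlib

section
/- For a fixed positive integer N_t and fixed real numbers δ and ψ, define the normalized array‑gain magnitude F(ω) = |∑_{n=1}^{N_t} e^{i(n−1)πψ} g_n(ω)| / √(∑_{n=1}^{N_t} g_n(ω)²), where g_n(ω) = Sa(δ(ω − (n−1)π)). Then F is symmetric about ω = (N_t − 1)π/2, i.e. F((N_t − 1)π − ω) = F(ω) for every real ω. (This is Theorem 1: the beamforming gain magnitude |a^H(S) f(δ,ω)| of the unit‑power adaptive‑beamwidth precoder is symmetric about ω = (N_t−1)π/2.) -/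
open Real Finset

/-- The normalized sample function `Sa x = sin x / x` with `Sa 0 = 1`. -/
noncomputable def Sa (x : ℝ) : ℝ := if x = 0 then 1 else Real.sin x / x

/-- `g δ n ω = Sa (δ (ω − (n−1)π))`. -/
noncomputable def g (δ : ℝ) (n : ℕ) (ω : ℝ) : ℝ := Sa (δ * (ω - ((n : ℝ) - 1) * π))

/-- The normalized array-gain magnitude
`F(ω) = |∑_{n=1}^{N_t} e^{i(n−1)πψ} g_n(ω)| / √(∑_{n=1}^{N_t} g_n(ω)²)`. -/
noncomputable def F (Nt : ℕ) (δ ψ : ℝ) (ω : ℝ) : ℝ :=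
  ‖∑ n ∈ Finset.Icc 1 Nt,
      Complex.exp (Complex.I * ((((n : ℝ) - 1) * π * ψ : ℝ) : ℂ)) * ((g δ n ω : ℝ) : ℂ)‖ /
    Real.sqrt (∑ n ∈ Finset.Icc 1 Nt, (g δ n ω) ^ 2)

lemma Sa_neg (x : ℝ) : Sa (-x) = Sa x := by
  unfold Sa
  rcases eq_or_ne x 0 with h | h
  · simp [h]
  · rw [if_neg (by simpa using h), if_neg h, Real.sin_neg, neg_div_neg_eq]

lemma g_reflect (Nt : ℕ) (δ ω : ℝ) {n : ℕ} (h1 : 1 ≤ n) (h2 : n ≤ Nt) :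
    g δ n (((Nt : ℝ) - 1) * π - ω) = g δ (Nt + 1 - n) ω := by
  unfold g
  have hcast : ((Nt + 1 - n : ℕ) : ℝ) = (Nt : ℝ) + 1 - n := by
    push_cast [Nat.cast_sub (by omega : n ≤ Nt + 1)]
    ring
  rw [hcast, ← Sa_neg (δ * (ω - ((Nt : ℝ) + 1 - n - 1) * π))]
  ring_nf

lemma sum_reflect {M : Type*} [AddCommMonoid M] (Nt : ℕ) (f : ℕ → M) :
    ∑ n ∈ Icc 1 Nt, f (Nt + 1 - n) = ∑ n ∈ Icc 1 Nt, f n := by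
  apply Finset.sum_nbij' (fun n => Nt + 1 - n) (fun n => Nt + 1 - n)
  all_goals intro a ha; simp only [Finset.mem_Icc] at *
  all_goals omega

/-- Theorem 1: the beamforming gain magnitude is symmetric about `ω = (N_t − 1)π/2`. -/
theorem F_symm (Nt : ℕ) (hNt : 0 < Nt) (δ ψ : ℝ) :
    ∀ ω : ℝ, F Nt δ ψ (((Nt : ℝ) - 1) * π - ω) = F Nt δ ψ ω := by
  intro ω
  unfold F
  have hden : ∑ n ∈ Icc 1 Nt, (g δ n (((Nt : ℝ) - 1) * π - ω)) ^ 2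
      = ∑ n ∈ Icc 1 Nt, (g δ n ω) ^ 2 := by
    rw [← sum_reflect Nt (fun n => (g δ n ω) ^ 2)]
    apply Finset.sum_congr rfl
    intro n hn
    simp only [Finset.mem_Icc] at hn
    rw [g_reflect Nt δ ω hn.1 hn.2]
  rw [hden]
  congr 1
  -- numerator abs equality
  have hnum : ∑ n ∈ Icc 1 Nt,
      Complex.exp (Complex.I * ((((n : ℝ) - 1) * π * ψ : ℝ) : ℂ)) *
        ((g δ n (((Nt : ℝ) - 1) * π - ω) : ℝ) : ℂ)
      = Complex.exp (Complex.I * ((((Nt : ℝ) - 1) * π * ψ : ℝ) : ℂ)) *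
        (starRingEnd ℂ) (∑ n ∈ Icc 1 Nt,
          Complex.exp (Complex.I * ((((n : ℝ) - 1) * π * ψ : ℝ) : ℂ)) * ((g δ n ω : ℝ) : ℂ)) := by
    rw [map_sum, Finset.mul_sum]
    rw [show (∑ n ∈ Icc 1 Nt,
      Complex.exp (Complex.I * ((((n : ℝ) - 1) * π * ψ : ℝ) : ℂ)) *
        ((g δ n (((Nt : ℝ) - 1) * π - ω) : ℝ) : ℂ))
      = ∑ n ∈ Icc 1 Nt,
      Complex.exp (Complex.I * ((((n : ℝ) - 1) * π * ψ : ℝ) : ℂ)) *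
        ((g δ (Nt + 1 - n) ω : ℝ) : ℂ) from by
        apply Finset.sum_congr rfl; intro n hn
        simp only [Finset.mem_Icc] at hn
        rw [g_reflect Nt δ ω hn.1 hn.2]]
    rw [← sum_reflect Nt (fun n => Complex.exp (Complex.I * ((((n : ℝ) - 1) * π * ψ : ℝ) : ℂ)) *
        ((g δ (Nt + 1 - n) ω : ℝ) : ℂ))]
    apply Finset.sum_congr rfl
    intro n hn
    simp only [Finset.mem_Icc] at hn
    have h1 : Nt + 1 - (Nt + 1 - n) = n := by omega
    rw [h1]
    have hcast : ((Nt + 1 - n : ℕ) : ℝ) = (Nt : ℝ) + 1 - n := by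
      push_cast [Nat.cast_sub (by omega : n ≤ Nt + 1)]; ring
    rw [hcast, map_mul, ← Complex.exp_conj, ← mul_assoc, ← Complex.exp_add,
      Complex.conj_ofReal]
    congr 1
    simp only [map_mul, Complex.conj_I, Complex.conj_ofReal]
    push_cast
    ring
  rw [hnum, norm_mul, Complex.norm_exp]
  have : (Complex.I * ((((Nt : ℝ) - 1) * π * ψ : ℝ) : ℂ)).re = 0 := by
    simp [Complex.mul_re]
  rw [this, Real.exp_zero, one_mul, Complex.norm_conj]
end

section
/- Let N_t be a positive integer and let D = {(m,n) ∈ ℤ × ℤ : 1 ≤ n ≤ N_t − 1 and n + 1 ≤ m ≤ N_t}. Let Δ be an integer with 1 ≤ Δ ≤ N_t − 2, and set D₁ = {(m,n) ∈ D : m + n = N_t + 1 + Δ} and D₂ = {(m,n) ∈ D : m + n = N_t + 1 − Δ}. Then for every integer x₀, the number of pairs (m,n) ∈ D₁ with m − n = x₀ equals the number of pairs (m',n') ∈ D₂ with m' − n' = x₀. (Lemma 3, restated in counting form: the difference m − n has the same distribution under the uniform distributions on D₁ and on D₂.) -/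
open Finset

/-- The index set `D = {(m,n) : 1 ≤ n ≤ N_t − 1, n + 1 ≤ m ≤ N_t}` of integer pairs. -/
noncomputable def D (Nt : ℕ) : Finset (ℤ × ℤ) :=
  (Finset.Icc (1 : ℤ) (Nt : ℤ) ×ˢ Finset.Icc (1 : ℤ) (Nt : ℤ)).filter
    (fun p => 1 ≤ p.2 ∧ p.2 ≤ (Nt : ℤ) - 1 ∧ p.2 + 1 ≤ p.1 ∧ p.1 ≤ (Nt : ℤ))

/-- Lemma 3 (counting form): for `1 ≤ Δ ≤ N_t − 2`, within the fibers
`D₁ = {(m,n) ∈ D : m + n = N_t + 1 + Δ}` and `D₂ = {(m,n) ∈ D : m + n = N_t + 1 − Δ}`,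
each value `x₀` of the difference `m − n` occurs equally often. -/
theorem lemma3_counting (Nt : ℕ) (hNt : 0 < Nt) (Δ : ℤ) (hΔ1 : 1 ≤ Δ)
    (hΔ2 : Δ ≤ (Nt : ℤ) - 2) (x₀ : ℤ) :
    ((D Nt).filter (fun p => p.1 + p.2 = (Nt : ℤ) + 1 + Δ ∧ p.1 - p.2 = x₀)).card =
      ((D Nt).filter (fun p => p.1 + p.2 = (Nt : ℤ) + 1 - Δ ∧ p.1 - p.2 = x₀)).card := by
  apply Finset.card_bij (fun p _ => (p.1 - Δ, p.2 - Δ))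
  · intro p hp
    simp only [D, Finset.mem_filter, Finset.mem_product, Finset.mem_Icc] at hp ⊢
    omega
  · intro p hp q hq h
    simp only [Prod.mk.injEq] at h
    exact Prod.ext (by omega) (by omega)
  · intro q hq
    refine ⟨(q.1 + Δ, q.2 + Δ), ?_, ?_⟩
    · simp only [D, Finset.mem_filter, Finset.mem_product, Finset.mem_Icc] at hq ⊢
      omega
    · simp
end
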